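/- Let E be a finite set with |E| = e ≥ 1, let V be a ℚ-vector space, let ε ∈ {1, −1}, and let a : ℕ → (E → ℕ) → V be a family of elements (written a_i(n)) such that: (Parity) a_i(n) = 0 whenever (−1)^i ≠ ε; and (Relations) for every subset S ⊆ E with (−1)^{e − |S|} = −ε, every function n_S : S → ℕ, and every natural number q ≤ e − |S|, the finite sum ∑ a_i(n) over all pairs (i, m) with m : (E∖S) → ℕ and i + ∑_{v∉S} m_v = q, where n agrees with n_S on S and with m on E∖S, is zero. Then for every i < e: (i) a_i(n) = 0 whenever the support {v ∈ E : n_v ≠ 0} has fewer than e − i elements; and (ii) ∑_{n : E→ℕ, ∑ n_v = e−i} a_i(n) = 0. -/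

import Mathlib

open Finset

section Aux
variable {E : Type*} [Fintype E] [DecidableEq E]

def ind (A : Finset E) : E → ℕ := fun v => if v ∈ A then 1 else 0

lemma card_filter_ne_le_sum (s : Finset E) (f : E → ℕ) :
    (s.filter fun v => f v ≠ 0).card ≤ ∑ v ∈ s, f v := by
  calc (s.filter fun v => f v ≠ 0).card
      = ∑ _v ∈ s.filter fun v => f v ≠ 0, 1 := by rw [card_eq_sum_ones]
    _ ≤ ∑ v ∈ s.filter fun v => f v ≠ 0, f v := by
        apply sum_le_sum; intro v hv
        have := (mem_filter.mp hv).2; omega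
    _ ≤ ∑ v ∈ s, f v := sum_le_sum_of_subset (filter_subset _ _)

lemma sum_eq_card_filter (s : Finset E) (f : E → ℕ) (h : ∀ v ∈ s, f v ≤ 1) :
    ∑ v ∈ s, f v = (s.filter fun v => f v ≠ 0).card := by
  rw [card_eq_sum_ones, ← Finset.sum_filter_ne_zero s]
  apply sum_congr rfl; intro v hv
  have h1 := (mem_filter.mp hv).2
  have := h v (mem_filter.mp hv).1; omega

lemma card_filter_ne_lt_sum (s : Finset E) (f : E → ℕ) (v0 : E) (hv0 : v0 ∈ s) (h2 : 2 ≤ f v0) :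
    (s.filter fun v => f v ≠ 0).card < ∑ v ∈ s, f v := by
  rw [← Finset.add_sum_erase s f hv0]
  have h3 := card_filter_ne_le_sum (s.erase v0) f
  have h4 : (s.filter fun v => f v ≠ 0) ⊆ insert v0 ((s.erase v0).filter fun v => f v ≠ 0) := by
    intro x hx
    rcases mem_filter.mp hx with ⟨hxs, hxf⟩
    by_cases hx0 : x = v0
    · simp [hx0]
    · exact mem_insert_of_mem (mem_filter.mpr ⟨mem_erase.mpr ⟨hx0, hxs⟩, hxf⟩)
  have h5 := card_le_card h4
  have h6 := card_insert_le v0 ((s.erase v0).filter fun v => f v ≠ 0)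
  omega

lemma neg_one_pow_mod (x y : ℕ) (h : (-1:ℤ)^x = (-1:ℤ)^y) : x % 2 = y % 2 := by
  rcases Nat.even_or_odd x with hx | hx <;> rcases Nat.even_or_odd y with hy | hy
  · rw [Nat.even_iff] at hx hy; omega
  · rw [hx.neg_one_pow, hy.neg_one_pow] at h; norm_num at h
  · rw [hx.neg_one_pow, hy.neg_one_pow] at h; norm_num at h
  · rw [Nat.odd_iff] at hx hy; omega

lemma sum_indicator {V : Type*} [AddCommMonoid V] (N k : ℕ) (hN : 1 ≤ N)
    (S : Finset E) (f : (E → ℕ) → V) :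
    (∑ m : E → Fin (N+1),
      if (∀ v ∈ S, (m v : ℕ) = 0) ∧ (∑ v ∈ Sᶜ, (m v : ℕ)) = k ∧ (∀ v, (m v : ℕ) ≤ 1) then
        f (fun v => (m v : ℕ)) else 0)
      = ∑ B ∈ Sᶜ.powersetCard k, f (ind B) := by
  rw [← Finset.sum_filter]
  refine Finset.sum_nbij' (fun m => Finset.univ.filter (fun v => (m v : ℕ) ≠ 0))
    (fun B v => if v ∈ B then (⟨1, by omega⟩ : Fin (N+1)) else ⟨0, by omega⟩)
    ?_ ?_ ?_ ?_ ?_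
  · intro m hm
    rcases mem_filter.mp hm with ⟨-, h0, hsum, hle⟩
    have hsub : (Finset.univ.filter (fun v => (m v : ℕ) ≠ 0)) ⊆ Sᶜ := by
      intro v hv
      rcases mem_filter.mp hv with ⟨-, hv⟩
      rw [mem_compl]; intro hvS; exact hv (h0 v hvS)
    rw [mem_powersetCard]
    refine ⟨hsub, ?_⟩
    rw [← hsum, sum_eq_card_filter Sᶜ _ (fun v _ => hle v)]
    congr 1
    ext v
    simp only [mem_filter, mem_univ, true_and, mem_compl]
    constructor
    · intro hv; exact ⟨by simpa using mem_compl.mp (hsub (mem_filter.mpr ⟨mem_univ v, hv⟩)), hv⟩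
    · exact fun h => h.2
  · intro B hB
    rcases mem_powersetCard.mp hB with ⟨hBsub, hBcard⟩
    rw [mem_filter]
    refine ⟨mem_univ _, ?_, ?_, ?_⟩
    · intro v hvS
      have : v ∉ B := fun hvB => (mem_compl.mp (hBsub hvB)) hvS
      simp [this]
    · have : ∀ v, (((if v ∈ B then (⟨1, by omega⟩ : Fin (N+1)) else ⟨0, by omega⟩) : Fin (N+1)) : ℕ)
          = if v ∈ B then 1 else 0 := by
        intro v; split <;> rfl
      rw [Finset.sum_congr rfl (fun v _ => this v), Finset.sum_ite_mem,
        inter_eq_right.mpr hBsub, ← hBcard, card_eq_sum_ones]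
    · intro v; by_cases h : v ∈ B <;> simp [h]
  · intro m hm
    rcases mem_filter.mp hm with ⟨-, h0, hsum, hle⟩
    funext v
    by_cases hv : (m v : ℕ) ≠ 0
    · have h1 : (m v : ℕ) = 1 := by have := hle v; omega
      simp only [mem_filter, mem_univ, true_and, hv, if_true]
      exact Fin.ext (by simp [h1])
    · push_neg at hv
      simp only [mem_filter, mem_univ, true_and, hv, ne_eq, not_true_eq_false, if_false]
      exact Fin.ext (by simp [hv])
  · intro B hB
    ext v
    simp only [mem_filter, mem_univ, true_and]
    by_cases hv : v ∈ B <;> simp [hv]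
  · intro m hm
    rcases mem_filter.mp hm with ⟨-, h0, hsum, hle⟩
    congr 1
    funext v
    by_cases hv : (m v : ℕ) ≠ 0
    · have h1 : (m v : ℕ) = 1 := by have := hle v; omega
      simp [ind, mem_filter, hv, h1]
      exact fun h => hv (by rw [h]; rfl)
    · push_neg at hv
      simp [ind, mem_filter, hv]
      exact Fin.ext (by simp [hv])

lemma double_count {V : Type*} [AddCommGroup V] [Module ℚ V]
    (F : Finset E → V) (S : Finset E) (k : ℕ) (hk : 1 ≤ k)
    (hIH : ∀ S' : Finset E, S'.card = S.card + (k - 1) → ∑ w ∈ S'ᶜ, F (insert w S') = 0) :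
    ∑ B ∈ Sᶜ.powersetCard k, F (S ∪ B) = 0 := by
  have key : (k : ℚ) • ∑ B ∈ Sᶜ.powersetCard k, F (S ∪ B) = 0 := by
    rw [Finset.smul_sum]
    have h1 : ∀ B ∈ Sᶜ.powersetCard k, (k:ℚ) • F (S ∪ B) = ∑ _w ∈ B, F (S ∪ B) := by
      intro B hB
      rw [sum_const, (mem_powersetCard.mp hB).2, Nat.cast_smul_eq_nsmul]
    rw [sum_congr rfl h1, Finset.sum_sigma' (Sᶜ.powersetCard k) (fun B => B) (fun B _ => F (S ∪ B))]
    rw [Finset.sum_nbij' (t := (Sᶜ.powersetCard (k-1)).sigma (fun B' => Sᶜ \ B'))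
      (g := fun x => F (S ∪ insert x.2 x.1))
      (fun x => ⟨x.1.erase x.2, x.2⟩) (fun x => ⟨insert x.2 x.1, x.2⟩)
      ?_ ?_ ?_ ?_ ?_]
    · rw [Finset.sum_sigma]
      apply sum_eq_zero
      intro B' hB'
      rcases mem_powersetCard.mp hB' with ⟨hsub, hcard⟩
      have hdisj : Disjoint S B' := by
        rw [Finset.disjoint_right]; intro v hv; exact mem_compl.mp (hsub hv)
      have h2 : Sᶜ \ B' = (S ∪ B')ᶜ := by
        rw [compl_union, sdiff_eq]; rfl
      rw [h2]
      have h3 : ∀ w ∈ (S ∪ B')ᶜ, F (S ∪ insert w B') = F (insert w (S ∪ B')) := by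
        intro w _; rw [Finset.union_insert]
      rw [sum_congr rfl h3]
      exact hIH (S ∪ B') (by rw [card_union_of_disjoint hdisj, hcard])
    · rintro ⟨B, w⟩ hx
      rw [mem_sigma] at hx ⊢
      rcases hx with ⟨hB, hw⟩
      rcases mem_powersetCard.mp hB with ⟨hsub, hcard⟩
      constructor
      · rw [mem_powersetCard]
        exact ⟨(erase_subset _ _).trans hsub, by rw [card_erase_of_mem hw, hcard]⟩
      · rw [mem_sdiff]
        exact ⟨hsub hw, notMem_erase _ _⟩
    · rintro ⟨B', w⟩ hx
      rw [mem_sigma] at hx ⊢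
      rcases hx with ⟨hB', hw⟩
      rcases mem_powersetCard.mp hB' with ⟨hsub, hcard⟩
      rcases mem_sdiff.mp hw with ⟨hw1, hw2⟩
      constructor
      · rw [mem_powersetCard]
        refine ⟨insert_subset hw1 hsub, ?_⟩
        rw [card_insert_of_notMem hw2, hcard]; omega
      · exact mem_insert_self _ _
    · rintro ⟨B, w⟩ hx
      rw [mem_sigma] at hx
      simp [insert_erase hx.2]
    · rintro ⟨B', w⟩ hx
      rw [mem_sigma] at hx
      simp [erase_insert (mem_sdiff.mp hx.2).2]
    · rintro ⟨B, w⟩ hx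
      rw [mem_sigma] at hx
      simp only []
      rw [insert_erase hx.2]
  have hk0 : (k : ℚ) ≠ 0 := by positivity
  rcases smul_eq_zero.mp key with h | h
  · exact absurd h hk0
  · exact h

end Aux

theorem taylor_coefficients_vanishing
    {E : Type*} [Fintype E] [DecidableEq E] (e : ℕ) (he : Fintype.card E = e) (he1 : 1 ≤ e)
    {V : Type*} [AddCommGroup V] [Module ℚ V]
    (ε : ℤ) (hε : ε = 1 ∨ ε = -1)
    (a : ℕ → (E → ℕ) → V)
    (hparity : ∀ i n, (-1 : ℤ) ^ i ≠ ε → a i n = 0)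
    (hrel : ∀ S : Finset E, (-1 : ℤ) ^ (e - S.card) = -ε →
      ∀ nS : E → ℕ, ∀ q : ℕ, q ≤ e - S.card →
        (∑ i ∈ Finset.range (q + 1), ∑ m : E → Fin (q + 1),
          if (∀ v ∈ S, (m v : ℕ) = 0) ∧ i + ∑ v ∈ Sᶜ, (m v : ℕ) = q then
            a i (fun v => if v ∈ S then nS v else (m v : ℕ))
          else 0) = 0) :
    ∀ i < e,
      (∀ n : E → ℕ, (Finset.univ.filter fun v => n v ≠ 0).card < e - i → a i n = 0) ∧
      (∑ n : E → Fin (e - i + 1),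
        if (∑ v, (n v : ℕ)) = e - i then a i (fun v => (n v : ℕ)) else 0) = 0 := by
  classical
  -- Part (i), by strong induction
  have L1 : ∀ i, i < e → ∀ n : E → ℕ,
      (Finset.univ.filter fun v => n v ≠ 0).card < e - i → a i n = 0 := by
    intro i
    induction i using Nat.strong_induction_on with
    | _ i IH =>
    intro hi n hn
    by_cases hpar : (-1:ℤ)^i = ε
    swap
    · exact hparity i n hpar
    set T : Finset E := Finset.univ.filter (fun v => n v ≠ 0) with hT
    have hTcard : T.card < e - i := hn
    obtain ⟨S, hTS, hScard, hSpar⟩ :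
        ∃ S : Finset E, T ⊆ S ∧ S.card ≤ e - i ∧ (-1:ℤ)^(e - S.card) = -ε := by
      by_cases h : (-1:ℤ)^(e - T.card) = -ε
      · exact ⟨T, subset_rfl, by omega, h⟩
      · obtain ⟨w, hw⟩ : ∃ w, w ∉ T := by
          by_contra hc
          push_neg at hc
          have h1 : T = Finset.univ := Finset.eq_univ_of_forall hc
          have h2 : T.card = e := by rw [h1, Finset.card_univ, he]
          omega
        refine ⟨insert w T, Finset.subset_insert _ _, ?_, ?_⟩
        · rw [Finset.card_insert_of_notMem hw]; omega
        · rw [Finset.card_insert_of_notMem hw]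
          have hstep : e - T.card = (e - (T.card + 1)) + 1 := by omega
          have hval : (-1:ℤ)^(e - T.card) = -(-1:ℤ)^(e-(T.card+1)) := by
            rw [hstep, pow_succ]; ring
          rw [hval] at h
          rcases neg_one_pow_eq_or ℤ (e - (T.card+1)) with h1 | h1 <;>
            rw [h1] at h ⊢ <;> rcases hε with h2 | h2 <;> rw [h2] at h ⊢ <;> omega
    have hle : i ≤ e - S.card := by omega
    have H := hrel S hSpar n i hle
    rw [Finset.sum_range_succ] at H
    have Hz : ∀ j ∈ Finset.range i, (∑ m : E → Fin (i+1),
        if (∀ v ∈ S, (m v : ℕ) = 0) ∧ j + ∑ v ∈ Sᶜ, (m v : ℕ) = i then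
          a j (fun v => if v ∈ S then n v else (m v : ℕ)) else 0) = 0 := by
      intro j hj
      rw [Finset.mem_range] at hj
      apply Finset.sum_eq_zero
      intro m _
      split_ifs with hc
      swap; · rfl
      rcases hc with ⟨h0, hsum⟩
      apply IH j hj (by omega)
      have hsub : (Finset.univ.filter fun v => (if v ∈ S then n v else (m v : ℕ)) ≠ 0)
          ⊆ T ∪ Sᶜ.filter (fun v => (m v : ℕ) ≠ 0) := by
        intro v hv
        rcases Finset.mem_filter.mp hv with ⟨-, hv⟩
        by_cases hvS : v ∈ S
        · rw [if_pos hvS] at hv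
          exact Finset.mem_union_left _ (Finset.mem_filter.mpr ⟨Finset.mem_univ _, hv⟩)
        · rw [if_neg hvS] at hv
          exact Finset.mem_union_right _
            (Finset.mem_filter.mpr ⟨Finset.mem_compl.mpr hvS, hv⟩)
      have h1 := Finset.card_le_card hsub
      have h2 := Finset.card_union_le T (Sᶜ.filter (fun v => (m v : ℕ) ≠ 0))
      have h3 := card_filter_ne_le_sum Sᶜ (fun v => (m v : ℕ))
      omega
    rw [Finset.sum_eq_zero Hz, zero_add] at H
    have hother : ∀ b : E → Fin (i+1), b ∈ (Finset.univ : Finset (E → Fin (i+1))) →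
        b ≠ (0 : E → Fin (i+1)) →
        (if (∀ v ∈ S, (b v : ℕ) = 0) ∧ i + ∑ v ∈ Sᶜ, (b v : ℕ) = i then
          a i (fun v => if v ∈ S then n v else (b v : ℕ)) else 0) = 0 := by
      intro b _ hbne
      split_ifs with hc
      swap; · rfl
      exfalso
      rcases hc with ⟨h0, hsum⟩
      have hz : ∀ v ∈ Sᶜ, (b v : ℕ) = 0 := by
        rw [← Finset.sum_eq_zero_iff]; omega
      apply hbne
      funext v
      apply Fin.ext
      by_cases hvS : v ∈ S
      · simpa using h0 v hvS
      · simpa using hz v (Finset.mem_compl.mpr hvS)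
    rw [Finset.sum_eq_single_of_mem (0 : E → Fin (i+1)) (Finset.mem_univ _) hother] at H
    rw [if_pos ⟨fun v _ => rfl, by simp⟩] at H
    rw [← H]
    congr 1
    funext v
    by_cases hvS : v ∈ S
    · rw [if_pos hvS]
    · rw [if_neg hvS]
      have hvT : v ∉ T := fun h => hvS (hTS h)
      have hnv : n v = 0 := by
        by_contra hne
        exact hvT (Finset.mem_filter.mpr ⟨Finset.mem_univ _, hne⟩)
      simp [hnv]
  -- key induction for part (ii)
  have L3 : ∀ j, j < e → (-1:ℤ)^j = ε → ∀ S : Finset E, S.card + (j+1) = e →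
      (∑ w ∈ Sᶜ, a j (ind (insert w S))) = 0 := by
    intro j
    induction j using Nat.strong_induction_on with
    | _ j IH =>
    intro hj hpar S hcard
    have hSpar : (-1:ℤ)^(e - S.card) = -ε := by
      have h1 : e - S.card = j + 1 := by omega
      rw [h1, pow_succ, hpar]; ring
    have H := hrel S hSpar (fun _ => 1) (j+1) (by omega)
    beta_reduce at H
    have conv : ∀ j', j' ≤ j + 1 → (-1:ℤ)^j' = ε →
        (∑ m : E → Fin (j+1+1),
          if (∀ v ∈ S, (m v : ℕ) = 0) ∧ j' + ∑ v ∈ Sᶜ, (m v : ℕ) = j+1 then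
            a j' (fun v => if v ∈ S then 1 else (m v : ℕ)) else 0)
        = ∑ B ∈ Sᶜ.powersetCard (j+1-j'), a j' (ind (S ∪ B)) := by
      intro j' hj' hpar'
      have hj'e : j' < e := by
        have hmod := neg_one_pow_mod j' j (hpar'.trans hpar.symm)
        omega
      have step1 : ∀ m : E → Fin (j+1+1),
          (if (∀ v ∈ S, (m v : ℕ) = 0) ∧ j' + ∑ v ∈ Sᶜ, (m v : ℕ) = j+1 then
            a j' (fun v => if v ∈ S then 1 else (m v : ℕ)) else 0)
          = (if (∀ v ∈ S, (m v : ℕ) = 0) ∧ (∑ v ∈ Sᶜ, (m v : ℕ)) = j+1-j'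
                ∧ (∀ v, (m v : ℕ) ≤ 1) then
              (fun g => a j' (fun v => if v ∈ S then 1 else g v)) (fun v => (m v : ℕ))
            else 0) := by
        intro m
        by_cases hc : (∀ v ∈ S, (m v : ℕ) = 0) ∧ j' + ∑ v ∈ Sᶜ, (m v : ℕ) = j+1
        · by_cases hle : ∀ v, (m v : ℕ) ≤ 1
          · rw [if_pos hc, if_pos ⟨hc.1, by omega, hle⟩]
          · rw [if_pos hc, if_neg (fun h => hle h.2.2)]
            push_neg at hle
            obtain ⟨v0, hv0⟩ := hle
            have hv0S : v0 ∉ S := fun h => by have := hc.1 v0 h; omega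
            apply L1 j' hj'e
            have hsub : (Finset.univ.filter fun v =>
                (if v ∈ S then (1:ℕ) else (m v : ℕ)) ≠ 0)
                ⊆ S ∪ Sᶜ.filter (fun v => (m v : ℕ) ≠ 0) := by
              intro v hv
              rcases Finset.mem_filter.mp hv with ⟨-, hv⟩
              by_cases hvS : v ∈ S
              · exact Finset.mem_union_left _ hvS
              · rw [if_neg hvS] at hv
                exact Finset.mem_union_right _
                  (Finset.mem_filter.mpr ⟨Finset.mem_compl.mpr hvS, hv⟩)
            have h1 := Finset.card_le_card hsub
            have h2 := Finset.card_union_le S (Sᶜ.filter (fun v => (m v : ℕ) ≠ 0))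
            have h3 : (Sᶜ.filter fun v => (m v : ℕ) ≠ 0).card < ∑ v ∈ Sᶜ, (m v : ℕ) :=
              card_filter_ne_lt_sum Sᶜ _ v0 (Finset.mem_compl.mpr hv0S)
                (by show 2 ≤ (m v0 : ℕ); omega)
            omega
        · rw [if_neg hc, if_neg (fun h => hc ⟨h.1, by omega⟩)]
      rw [Finset.sum_congr rfl (fun m _ => step1 m)]
      rw [sum_indicator (j+1) (j+1-j') (by omega) S
        (fun g => a j' (fun v => if v ∈ S then 1 else g v))]
      apply Finset.sum_congr rfl
      intro B hB
      rcases Finset.mem_powersetCard.mp hB with ⟨hBsub, -⟩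
      show a j' (fun v => if v ∈ S then 1 else ind B v) = a j' (ind (S ∪ B))
      congr 1
      funext v
      by_cases hvS : v ∈ S
      · simp [ind, hvS]
      · by_cases hvB : v ∈ B <;> simp [ind, hvS, hvB]
    rw [Finset.sum_range_succ, Finset.sum_range_succ] at H
    have Hlast : (∑ m : E → Fin (j+1+1),
        if (∀ v ∈ S, (m v:ℕ) = 0) ∧ (j+1) + ∑ v ∈ Sᶜ, (m v:ℕ) = j+1 then
          a (j+1) (fun v => if v ∈ S then 1 else (m v:ℕ)) else 0) = 0 := by
      apply Finset.sum_eq_zero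
      intro m _
      split_ifs with hc
      · apply hparity
        rw [pow_succ, hpar]
        rcases hε with h | h <;> rw [h] <;> norm_num
      · rfl
    have Hfirst : ∀ j'' ∈ Finset.range j, (∑ m : E → Fin (j+1+1),
        if (∀ v ∈ S, (m v:ℕ) = 0) ∧ j'' + ∑ v ∈ Sᶜ, (m v:ℕ) = j+1 then
          a j'' (fun v => if v ∈ S then 1 else (m v:ℕ)) else 0) = 0 := by
      intro j'' hj''
      rw [Finset.mem_range] at hj''
      by_cases hpar'' : (-1:ℤ)^j'' = ε
      · rw [conv j'' (by omega) hpar'']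
        apply double_count (fun A => a j'' (ind A)) S (j+1-j'') (by omega)
        intro S' hS'
        apply IH j'' hj''
          (by have := neg_one_pow_mod j'' j (hpar''.trans hpar.symm); omega) hpar'' S'
        omega
      · exact Finset.sum_eq_zero
          (fun m _ => by split_ifs with hc; exacts [hparity _ _ hpar'', rfl])
    rw [Finset.sum_eq_zero Hfirst, zero_add, Hlast, add_zero,
      conv j (by omega) hpar] at H
    rw [show j + 1 - j = 1 from by omega, Finset.powersetCard_one, Finset.sum_map] at H
    rw [← H]
    apply Finset.sum_congr rfl
    intro w hw
    simp only [Function.Embedding.coeFn_mk]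
    have huw : S ∪ {w} = insert w S := by ext v; simp [or_comm]
    rw [huw]
  intro i hi
  refine ⟨L1 i hi, ?_⟩
  by_cases hpar : (-1:ℤ)^i = ε
  swap
  · exact Finset.sum_eq_zero
      (fun n _ => by split_ifs with hc; exacts [hparity _ _ hpar, rfl])
  have hL4 : ∑ B ∈ (∅ : Finset E)ᶜ.powersetCard (e - i), a i (ind (∅ ∪ B)) = 0 := by
    apply double_count (fun A => a i (ind A)) ∅ (e - i) (by omega)
    intro S' hS'
    apply L3 i hi hpar S'
    simp only [Finset.card_empty] at hS'
    omega
  have step1 : ∀ n : E → Fin (e - i + 1),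
      (if (∑ v, (n v : ℕ)) = e - i then a i (fun v => (n v : ℕ)) else 0)
      = (if (∀ v ∈ (∅:Finset E), (n v : ℕ) = 0) ∧ (∑ v ∈ (∅:Finset E)ᶜ, (n v : ℕ)) = e - i
            ∧ (∀ v, (n v : ℕ) ≤ 1) then
          (fun g => a i g) (fun v => (n v : ℕ)) else 0) := by
    intro n
    have hcompl : (∅:Finset E)ᶜ = Finset.univ := Finset.compl_empty
    by_cases hc : (∑ v, (n v : ℕ)) = e - i
    · by_cases hle : ∀ v, (n v : ℕ) ≤ 1
      · rw [if_pos hc, if_pos ⟨fun v h => absurd h (Finset.notMem_empty v),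
          by rw [hcompl]; exact hc, hle⟩]
      · rw [if_pos hc, if_neg (fun h => hle h.2.2)]
        push_neg at hle
        obtain ⟨v0, hv0⟩ := hle
        apply L1 i hi
        have h3 : (Finset.univ.filter fun v => (n v : ℕ) ≠ 0).card < ∑ v, (n v : ℕ) :=
          card_filter_ne_lt_sum Finset.univ _ v0 (Finset.mem_univ _)
            (by show 2 ≤ (n v0 : ℕ); omega)
        omega
    · rw [if_neg hc, if_neg ?_]
      intro h
      apply hc
      have := h.2.1
      rwa [hcompl] at this
  rw [Finset.sum_congr rfl (fun n _ => step1 n)]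
  rw [sum_indicator (e - i) (e - i) (by omega) ∅ (fun g => a i g)]
  rw [← hL4]
  apply Finset.sum_congr rfl
  intro B hB
  show a i (ind B) = a i (ind (∅ ∪ B))
  rw [Finset.empty_union]
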